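/- If a dynamics f_u on a matrix Lie group G satisfies the group affine property, then the left-invariant error η_t = X_t⁻¹ X̂_t between two trajectories satisfies dη/dt = f_{u_t}(η) − f_{u_t}(I) η. -/

import Mathlib

open Matrix

section LinftyAux

attribute [local instance] Matrix.linftyOpNormedAddCommGroup Matrix.linftyOpNormedSpace
  Matrix.linftyOpNormedRing Matrix.linftyOpNormedAlgebra

/-- Entrywise characterization of `HasDerivAt` for matrix-valued functions (linfty norm). -/
lemma hasDerivAt_matrix_linfty {n : ℕ} {g : ℝ → Matrix (Fin n) (Fin n) ℝ}
    {v : Matrix (Fin n) (Fin n) ℝ} {t : ℝ} :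
    HasDerivAt g v t ↔ ∀ i j, HasDerivAt (fun s => g s i j) (v i j) t := by
  constructor
  · intro h i j
    let l : Matrix (Fin n) (Fin n) ℝ →ₗ[ℝ] ℝ :=
      (LinearMap.proj (R := ℝ) (φ := fun _ : Fin n => ℝ) j).comp (LinearMap.proj (R := ℝ) (φ := fun _ : Fin n => Fin n → ℝ) i)
    exact (l.toContinuousLinearMap.hasFDerivAt.comp_hasDerivAt t h :)
  · intro h
    have h2 : HasDerivAt (fun s => ∑ i : Fin n, ∑ j : Fin n,
        g s i j • (Matrix.single i j (1 : ℝ)))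
        (∑ i : Fin n, ∑ j : Fin n, v i j • (Matrix.single i j (1 : ℝ))) t :=
      HasDerivAt.fun_sum fun i _ => HasDerivAt.fun_sum fun j _ => (h i j).smul_const _
    have e1 : ∀ A : Matrix (Fin n) (Fin n) ℝ,
        A = ∑ i : Fin n, ∑ j : Fin n, A i j • (Matrix.single i j (1 : ℝ)) := by
      intro A
      conv_lhs => rw [Matrix.matrix_eq_sum_single A]
      simp [Matrix.smul_single]
    have : (fun s => ∑ i : Fin n, ∑ j : Fin n, g s i j • (Matrix.single i j (1 : ℝ)))
        = g := by funext s; exact (e1 (g s)).symm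
    rw [this, ← e1 v] at h2
    exact h2

lemma left_invariant_error_autonomous_linfty {n : ℕ}
    (G : Set (Matrix (Fin n) (Fin n) ℝ))
    (f : ℝ → Matrix (Fin n) (Fin n) ℝ → Matrix (Fin n) (Fin n) ℝ)
    (haff : ∀ t : ℝ, ∀ X₁ ∈ G, ∀ X₂ ∈ G,
      f t (X₁ * X₂) = f t X₁ * X₂ + X₁ * f t X₂ - X₁ * f t 1 * X₂)
    (X Xh : ℝ → Matrix (Fin n) (Fin n) ℝ)
    (hXG : ∀ t, X t ∈ G)
    (hXu : ∀ t, IsUnit (X t))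
    (hX : ∀ t, HasDerivAt X (f t (X t)) t)
    (hXh : ∀ t, HasDerivAt Xh (f t (Xh t)) t)
    (η : ℝ → Matrix (Fin n) (Fin n) ℝ)
    (hη : ∀ t, η t = Ring.inverse (X t) * Xh t)
    (hηG : ∀ t, η t ∈ G) :
    ∀ t, HasDerivAt η (f t (η t) - f t 1 * η t) t := by
  intro t
  set Y : ℝ → Matrix (Fin n) (Fin n) ℝ := fun s => Ring.inverse (X s) with hY
  obtain ⟨u, hu⟩ := hXu t
  have hYX : Y t * X t = 1 := by
    show Ring.inverse (X t) * X t = 1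
    rw [← hu, Ring.inverse_unit]; exact u.inv_mul
  have hXY : X t * Y t = 1 := by
    show X t * Ring.inverse (X t) = 1
    rw [← hu, Ring.inverse_unit]; exact u.mul_inv
  -- derivative of Y
  have hYd : HasDerivAt Y (-(Y t * (f t (X t)) * Y t)) t := by
    have h1 : HasFDerivAt Ring.inverse
        (-ContinuousLinearMap.mulLeftRight ℝ (Matrix (Fin n) (Fin n) ℝ) (↑u⁻¹) (↑u⁻¹)) (X t) := by
      rw [← hu]; exact hasFDerivAt_ringInverse u
    have := h1.comp_hasDerivAt t (hX t)
    simp [hY, ← hu, Ring.inverse_unit, mul_assoc] at this ⊢; exact this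
  -- derivative of η
  have hηd : HasDerivAt (fun s => Y s * Xh s)
      (-(Y t * (f t (X t)) * Y t) * Xh t + Y t * f t (Xh t)) t :=
    hYd.mul (hXh t)
  have hηeq : η = fun s => Y s * Xh s := funext hη
  rw [hηeq]
  convert hηd using 1
  have hXh_eq : Xh t = X t * η t := by
    rw [hη t, ← mul_assoc, hXY, one_mul]
  have key := haff t (X t) (hXG t) (η t) (hηG t)
  rw [← hXh_eq] at key
  show f t (Y t * Xh t) - f t 1 * (Y t * Xh t) = _
  rw [show Y t * Xh t = η t from (hη t).symm]
  calc f t (η t) - f t 1 * η t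
      = Y t * (X t * (f t (η t) - f t 1 * η t)) := by
        rw [← mul_assoc, hYX, one_mul]
    _ = -(Y t * (f t (X t)) * Y t) * Xh t + Y t * f t (Xh t) := by
        rw [key, hXh_eq]
        have h4 : -(Y t * f t (X t) * Y t) * (X t * η t) = -(Y t * (f t (X t) * η t)) := by
          rw [neg_mul, ← mul_assoc, mul_assoc (Y t * f t (X t)) (Y t) (X t), hYX, mul_one,
            mul_assoc]
        rw [h4]
        simp only [mul_sub, mul_add, mul_assoc]
        abel

end LinftyAux

attribute [local instance] Matrix.normedAddCommGroup Matrix.normedSpace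

/-- Entrywise characterization of `HasDerivAt` for matrix-valued functions (sup norm). -/
lemma hasDerivAt_matrix_sup {n : ℕ} {g : ℝ → Matrix (Fin n) (Fin n) ℝ}
    {v : Matrix (Fin n) (Fin n) ℝ} {t : ℝ} :
    HasDerivAt g v t ↔ ∀ i j, HasDerivAt (fun s => g s i j) (v i j) t := by
  constructor
  · intro h i j
    let l : Matrix (Fin n) (Fin n) ℝ →ₗ[ℝ] ℝ :=
      (LinearMap.proj (R := ℝ) (φ := fun _ : Fin n => ℝ) j).comp (LinearMap.proj (R := ℝ) (φ := fun _ : Fin n => Fin n → ℝ) i)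
    exact (l.toContinuousLinearMap.hasFDerivAt.comp_hasDerivAt t h :)
  · intro h
    have h2 : HasDerivAt (fun s => ∑ i : Fin n, ∑ j : Fin n,
        g s i j • (Matrix.single i j (1 : ℝ)))
        (∑ i : Fin n, ∑ j : Fin n, v i j • (Matrix.single i j (1 : ℝ))) t :=
      HasDerivAt.fun_sum fun i _ => HasDerivAt.fun_sum fun j _ => (h i j).smul_const _
    have e1 : ∀ A : Matrix (Fin n) (Fin n) ℝ,
        A = ∑ i : Fin n, ∑ j : Fin n, A i j • (Matrix.single i j (1 : ℝ)) := by
      intro A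
      conv_lhs => rw [Matrix.matrix_eq_sum_single A]
      simp [Matrix.smul_single]
    have : (fun s => ∑ i : Fin n, ∑ j : Fin n, g s i j • (Matrix.single i j (1 : ℝ)))
        = g := by funext s; exact (e1 (g s)).symm
    rw [this, ← e1 v] at h2
    exact h2

/-- Autonomous left-invariant error dynamics for group-affine dynamics:
if f_u is group affine on G and X, X̂ are trajectories of dX/dt = f_{u_t}(X),
then η_t = X_t⁻¹ X̂_t satisfies dη/dt = f_{u_t}(η) − f_{u_t}(I) η,
independently of either trajectory. -/
theorem left_invariant_error_autonomous {n : ℕ}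
    (G : Set (Matrix (Fin n) (Fin n) ℝ)) (hG1 : (1 : Matrix (Fin n) (Fin n) ℝ) ∈ G)
    (f : ℝ → Matrix (Fin n) (Fin n) ℝ → Matrix (Fin n) (Fin n) ℝ)
    (haff : ∀ t : ℝ, ∀ X₁ ∈ G, ∀ X₂ ∈ G,
      f t (X₁ * X₂) = f t X₁ * X₂ + X₁ * f t X₂ - X₁ * f t 1 * X₂)
    (X Xh : ℝ → Matrix (Fin n) (Fin n) ℝ)
    (hXG : ∀ t, X t ∈ G) (hXhG : ∀ t, Xh t ∈ G)
    (hXu : ∀ t, IsUnit (X t))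
    (hX : ∀ t, HasDerivAt X (f t (X t)) t)
    (hXh : ∀ t, HasDerivAt Xh (f t (Xh t)) t)
    (η : ℝ → Matrix (Fin n) (Fin n) ℝ)
    (hη : ∀ t, η t = Ring.inverse (X t) * Xh t)
    (hηG : ∀ t, η t ∈ G) :
    ∀ t, HasDerivAt η (f t (η t) - f t 1 * η t) t := by
  intro t
  have hX' := fun s => hasDerivAt_matrix_linfty.mpr (hasDerivAt_matrix_sup.mp (hX s))
  have hXh' := fun s => hasDerivAt_matrix_linfty.mpr (hasDerivAt_matrix_sup.mp (hXh s))
  exact hasDerivAt_matrix_sup.mpr (hasDerivAt_matrix_linfty.mp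
    (left_invariant_error_autonomous_linfty G f haff X Xh hXG hXu hX' hXh' η hη hηG t))
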